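/- Let p, r, c₀ be real numbers, let θ be a positive even integer, and let n ≠ m be integers with n, m ≥ 1 and max(n, m) < (p − θ − 1)/2. Suppose yₙ, yₘ : ℝ → ℝ are polynomial functions of degrees exactly n and m respectively, such that for i ∈ {n, m} and all real x: (x−r)x²yᵢ''(x) + ((θ+2−p)x² + (1+r(p−2))x − r)yᵢ'(x) − (i(i+1+θ−p)(x−r) + c₀)yᵢ(x) = 0. Then ∫₀^∞ (x−r)^θ x^{−p} e^{−1/x} yₙ(x) yₘ(x) dx = 0. -/

import Mathlib

open Filter Set Polynomial MeasureTheory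

private lemma poly_mul_rpow_tendsto (R : Polynomial ℝ) {p : ℝ} (h : (R.natDegree : ℝ) < p) :
    Tendsto (fun x : ℝ => R.eval x * x ^ (-p)) atTop (nhds 0) := by
  have hterm : ∀ j ∈ Finset.range (R.natDegree + 1),
      Tendsto (fun x : ℝ => R.coeff j * x ^ j * x ^ (-p)) atTop (nhds (0:ℝ)) := by
    intro j hj
    have hjle : (j : ℝ) ≤ R.natDegree := by
      exact_mod_cast Nat.lt_succ_iff.mp (Finset.mem_range.mp hj)
    have hjp : (j : ℝ) < p := lt_of_le_of_lt hjle h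
    have h1 : Tendsto (fun x : ℝ => x ^ ((j:ℝ) - p)) atTop (nhds 0) := by
      have := tendsto_rpow_neg_atTop (y := p - (j:ℝ)) (by linarith)
      simpa [neg_sub] using this
    have h2 : Tendsto (fun x : ℝ => R.coeff j * x ^ ((j:ℝ) - p)) atTop (nhds (0:ℝ)) := by
      simpa using h1.const_mul (R.coeff j)
    refine h2.congr' ?_
    filter_upwards [eventually_gt_atTop (0:ℝ)] with x hx
    rw [sub_eq_add_neg, Real.rpow_add hx, Real.rpow_natCast, mul_assoc]
  have hsum := tendsto_finset_sum _ hterm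
  simp only [Finset.sum_const_zero] at hsum
  refine hsum.congr fun x => ?_
  rw [Polynomial.eval_eq_sum_range, Finset.sum_mul]

/-- Finite orthogonality of the second finite sequence of exceptional X₁-orthogonal
polynomials on (0,∞) with respect to the weight `(x-r)^θ x^{-p} e^{-1/x}`. -/
theorem x1_finite_inverse_gamma_orthogonality
    (p r c0 : ℝ)
    (θ : ℕ) (hθpos : 0 < θ) (hθeven : Even θ)
    (n m : ℤ) (hn : 1 ≤ n) (hm : 1 ≤ m) (hnm : n ≠ m)
    (hdeg : ((max n m : ℤ) : ℝ) < (p - θ - 1) / 2)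
    (yn ym : ℝ → ℝ)
    (hynpoly : ∃ P : Polynomial ℝ, (∀ x, yn x = P.eval x) ∧ (P.natDegree : ℤ) = n)
    (hympoly : ∃ P : Polynomial ℝ, (∀ x, ym x = P.eval x) ∧ (P.natDegree : ℤ) = m)
    (heqn : ∀ x : ℝ,
      (x - r) * x ^ 2 * deriv (deriv yn) x
        + ((θ + 2 - p) * x ^ 2 + (1 + r * (p - 2)) * x - r) * deriv yn x
        - ((n : ℝ) * ((n : ℝ) + 1 + θ - p) * (x - r) + c0) * yn x = 0)
    (heqm : ∀ x : ℝ,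
      (x - r) * x ^ 2 * deriv (deriv ym) x
        + ((θ + 2 - p) * x ^ 2 + (1 + r * (p - 2)) * x - r) * deriv ym x
        - ((m : ℝ) * ((m : ℝ) + 1 + θ - p) * (x - r) + c0) * ym x = 0) :
    ∫ x in Set.Ioi (0 : ℝ),
      (x - r) ^ θ * x ^ (-p) * Real.exp (-1 / x) * yn x * ym x = 0 := by
  obtain ⟨Pn, hPn, hPnd⟩ := hynpoly
  obtain ⟨Pm, hPm, hPmd⟩ := hympoly
  have hyn : yn = fun x => Pn.eval x := funext hPn
  have hym : ym = fun x => Pm.eval x := funext hPm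
  subst hyn hym
  have hd1 : deriv (fun x => Pn.eval x) = fun x => (derivative Pn).eval x :=
    funext fun x => (Pn.hasDerivAt x).deriv
  have hd2 : deriv (fun x => Pm.eval x) = fun x => (derivative Pm).eval x :=
    funext fun x => (Pm.hasDerivAt x).deriv
  rw [hd1] at heqn
  rw [hd2] at heqm
  have hd1' : deriv (fun x => (derivative Pn).eval x)
      = fun x => (derivative (derivative Pn)).eval x :=
    funext fun x => ((derivative Pn).hasDerivAt x).deriv
  have hd2' : deriv (fun x => (derivative Pm).eval x)
      = fun x => (derivative (derivative Pm)).eval x :=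
    funext fun x => ((derivative Pm).hasDerivAt x).deriv
  rw [hd1'] at heqn
  rw [hd2'] at heqm
  simp only at heqn heqm
  show ∫ x in Set.Ioi (0 : ℝ),
      (x - r) ^ θ * x ^ (-p) * Real.exp (-1 / x) * Pn.eval x * Pm.eval x = 0
  -- numeric facts
  have hnR : (n : ℝ) < (p - θ - 1) / 2 := by
    have : (n : ℝ) ≤ ((max n m : ℤ) : ℝ) := by exact_mod_cast le_max_left n m
    linarith
  have hmR : (m : ℝ) < (p - θ - 1) / 2 := by
    have : (m : ℝ) ≤ ((max n m : ℤ) : ℝ) := by exact_mod_cast le_max_right n m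
    linarith
  have hsum1 : (n : ℝ) + (m : ℝ) + 1 ≤ 2 * ((max n m : ℤ) : ℝ) := by
    have : n + m + 1 ≤ 2 * max n m := by
      rcases max_cases n m with ⟨h1, h2⟩ | ⟨h1, h2⟩ <;> omega
    exact_mod_cast this
  have hsum : (n : ℝ) + (m : ℝ) + (θ:ℝ) + 2 < p := by linarith
  have hnm1 : (1:ℝ) ≤ (n:ℝ) := by exact_mod_cast hn
  have hmm1 : (1:ℝ) ≤ (m:ℝ) := by exact_mod_cast hm
  have hθR : (0:ℝ) ≤ (θ:ℝ) := Nat.cast_nonneg θ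
  have hp0 : 0 < p := by linarith
  set Λ : ℝ := (n : ℝ) * ((n : ℝ) + 1 + θ - p) - (m : ℝ) * ((m : ℝ) + 1 + θ - p) with hΛdef
  have hΛ : Λ ≠ 0 := by
    have hfac : Λ = ((n:ℝ) - m) * ((n:ℝ) + m + 1 + θ - p) := by rw [hΛdef]; ring
    have h1 : (n:ℝ) - m ≠ 0 := sub_ne_zero.mpr (by exact_mod_cast hnm)
    have h2 : (n:ℝ) + m + 1 + θ - p < 0 := by linarith
    rw [hfac]; exact mul_ne_zero h1 (ne_of_lt h2)
  set Wp : Polynomial ℝ := derivative Pn * Pm - Pn * derivative Pm with hWp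
  set Rp : Polynomial ℝ := (X - C r) ^ θ * X ^ 2 * Wp with hRp
  set F : ℝ → ℝ := fun x => Rp.eval x * (x ^ (-p) * Real.exp (-1 / x)) with hF
  have hNn : (Pn.natDegree : ℝ) = (n:ℝ) := by exact_mod_cast hPnd
  have hMm : (Pm.natDegree : ℝ) = (m:ℝ) := by exact_mod_cast hPmd
  have hdegW : Wp.natDegree ≤ Pn.natDegree + Pm.natDegree := by
    refine le_trans (natDegree_sub_le _ _) (max_le ?_ ?_)
    · exact le_trans natDegree_mul_le
        (add_le_add (le_trans (natDegree_derivative_le _) (Nat.sub_le _ _)) le_rfl)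
    · exact le_trans natDegree_mul_le
        (add_le_add le_rfl (le_trans (natDegree_derivative_le _) (Nat.sub_le _ _)))
  have hdegR : (Rp.natDegree : ℝ) < p := by
    have h1 : Rp.natDegree ≤ (θ + 2) + (Pn.natDegree + Pm.natDegree) := by
      refine le_trans natDegree_mul_le (add_le_add ?_ hdegW)
      refine le_trans natDegree_mul_le (add_le_add ?_ (le_of_eq (natDegree_X_pow 2)))
      exact le_trans natDegree_pow_le (by simp [natDegree_X_sub_C])
    have h2 : (Rp.natDegree : ℝ) ≤ ((θ + 2) + (Pn.natDegree + Pm.natDegree) : ℕ) := by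
      exact_mod_cast h1
    push_cast at h2
    rw [hNn, hMm] at h2
    linarith
  have hftop : Tendsto F atTop (nhds 0) := by
    have hT2 : Tendsto (fun x : ℝ => Real.exp (-1 / x)) atTop (nhds 1) := by
      have h0 : Tendsto (fun x : ℝ => -1 / x) atTop (nhds 0) := by
        simpa [div_eq_mul_inv] using tendsto_inv_atTop_zero.const_mul (-1 : ℝ)
      have := (Real.continuous_exp.tendsto 0).comp h0
      simpa [Function.comp_def, Real.exp_zero] using this
    have := (poly_mul_rpow_tendsto Rp hdegR).mul hT2
    simpa [hF, mul_assoc] using this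
  have hF0 : F 0 = 0 := by
    rw [hF]
    simp [Real.zero_rpow (neg_ne_zero.mpr hp0.ne')]
  have hT0 : Tendsto F (nhdsWithin 0 (Set.Ioi 0)) (nhds 0) := by
    have hg : Tendsto (fun x : ℝ => x ^ (-p) * Real.exp (-1 / x))
        (nhdsWithin 0 (Set.Ioi 0)) (nhds 0) := by
      have h1 : Tendsto (fun t : ℝ => t ^ p * Real.exp (-1 * t)) atTop (nhds 0) :=
        tendsto_rpow_mul_exp_neg_mul_atTop_nhds_zero p 1 one_pos
      have h2 := h1.comp tendsto_inv_nhdsGT_zero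
      refine h2.congr' ?_
      filter_upwards [self_mem_nhdsWithin] with x hx
      have hx0 : (0:ℝ) < x := hx
      simp only [Function.comp_apply]
      rw [Real.inv_rpow hx0.le, ← Real.rpow_neg hx0.le,
        show (-1:ℝ) * x⁻¹ = -1 / x from by ring]
    have hpoly : Tendsto (fun x : ℝ => Rp.eval x) (nhdsWithin 0 (Set.Ioi 0))
        (nhds (Rp.eval 0)) := ((Rp.continuous).tendsto 0).mono_left nhdsWithin_le_nhds
    have := hpoly.mul hg
    simpa [hF] using this
  have hcont : ContinuousWithinAt F (Set.Ici (0:ℝ)) 0 := by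
    have hT : Tendsto F (nhdsWithin 0 (Set.Ici 0)) (nhds 0) := by
      rw [← Set.Ioi_insert, nhdsWithin_insert, tendsto_sup]
      refine ⟨?_, hT0⟩
      have h := tendsto_pure_nhds F 0
      rwa [hF0] at h
    rw [ContinuousWithinAt, hF0]; exact hT
  obtain ⟨k, hk⟩ := Nat.exists_eq_succ_of_ne_zero hθpos.ne'
  subst hk
  have hderiv : ∀ x ∈ Set.Ioi (0:ℝ), HasDerivAt F
      (Λ * ((x - r) ^ (k+1) * x ^ (-p) * Real.exp (-1 / x) * Pn.eval x * Pm.eval x)) x := by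
    intro x hx
    have hx0 : (0:ℝ) < x := hx
    have hxne : x ≠ 0 := hx0.ne'
    have hexp : HasDerivAt (fun y : ℝ => Real.exp (-1 / y))
        (Real.exp (-1 / x) * (x^2)⁻¹) x := by
      have h1 : HasDerivAt (fun y : ℝ => -1 / y) ((x^2)⁻¹) x := by
        have h := (hasDerivAt_inv hxne).fun_neg
        have heqfun : (fun y : ℝ => -1 / y) = fun y => -(y⁻¹) := by
          funext y; ring
        rw [heqfun]
        simpa using h
      simpa using h1.exp
    have hrpow : HasDerivAt (fun y : ℝ => y ^ (-p)) (-p * x ^ (-p - 1)) x :=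
      Real.hasDerivAt_rpow_const (Or.inl hxne)
    have hc2 : x ^ (-p) = x ^ (-p-2) * x^2 := by
      have h2 : x ^ ((-p-2) + ((2:ℕ):ℝ)) = x ^ (-p-2) * x ^ (2:ℕ) := by
        rw [Real.rpow_add hx0, Real.rpow_natCast]
      have h3 : (-p-2) + ((2:ℕ):ℝ) = -p := by push_cast; ring
      rw [h3] at h2
      exact h2
    have hc1 : x ^ (-p-1) = x ^ (-p-2) * x := by
      rw [show -p-1 = (-p-2) + 1 from by ring, Real.rpow_add hx0, Real.rpow_one]
    have hs : HasDerivAt (fun y : ℝ => y ^ (-p) * Real.exp (-1 / y))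
        (x ^ (-p-2) * Real.exp (-1 / x) * (1 - p * x)) x := by
      have h := hrpow.fun_mul hexp
      refine h.congr_deriv ?_
      rw [hc1, hc2]
      field_simp
      ring
    have hR : HasDerivAt (fun y : ℝ => Rp.eval y) (Rp.derivative.eval x) x := Rp.hasDerivAt x
    have hFd := hR.mul hs
    have hval : Λ * ((x - r) ^ (k+1) * x ^ (-p) * Real.exp (-1 / x) * Pn.eval x * Pm.eval x)
        = Rp.derivative.eval x * (x ^ (-p) * Real.exp (-1 / x))
          + Rp.eval x * (x ^ (-p-2) * Real.exp (-1 / x) * (1 - p * x)) := by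
      have hens := heqn x
      have hems := heqm x
      simp only [hΛdef, hRp, hWp, derivative_mul, derivative_pow, derivative_sub,
        derivative_X_pow, derivative_X, derivative_C, eval_mul, eval_add, eval_sub,
        eval_pow, eval_X, eval_C, eval_natCast, eval_one, Nat.add_sub_cancel,
        Nat.succ_eq_add_one, mul_one, sub_zero, zero_mul, mul_zero]
      rw [hc2]
      push_cast at hens hems ⊢
      linear_combination (-((x - r)^k * (x ^ (-p-2) * x^2) * Real.exp (-1 / x) * Pm.eval x)) * hens
        + (((x - r)^k * (x ^ (-p-2) * x^2) * Real.exp (-1 / x) * Pn.eval x)) * hems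
    rw [hF, hval]
    exact hFd
  by_cases hint : IntegrableOn
      (fun x => (x - r) ^ (k+1) * x ^ (-p) * Real.exp (-1 / x) * Pn.eval x * Pm.eval x)
      (Set.Ioi (0:ℝ)) volume
  · have f'int : IntegrableOn
        (fun x => Λ * ((x - r) ^ (k+1) * x ^ (-p) * Real.exp (-1 / x) * Pn.eval x * Pm.eval x))
        (Set.Ioi (0:ℝ)) volume := hint.const_mul Λ
    have key := integral_Ioi_of_hasDerivAt_of_tendsto hcont hderiv f'int hftop
    rw [hF0, sub_zero] at key
    rw [MeasureTheory.integral_const_mul] at key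
    exact (mul_eq_zero.mp key).resolve_left hΛ
  · exact MeasureTheory.integral_undef hint
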